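/- Let y = Xβ* + ε with β* supported on S, let Π_S be the orthogonal projection onto span{X_j : j ∈ S} and Π_S^⊥ = I − Π_S, and set Z = Π_S^⊥ X_{S^c} and ξ = Π_S^⊥ ε. Consider (P1): minimize (1/n)‖ξ − Z β^{(P1)}‖₂² over β^{(P1)} ⪰ 0, with minimizer β̂^{(P1)}, and (P2): minimize (1/n)‖Π_S ε + X_S β*_S − X_S β^{(P2)} − Π_S X_{S^c} β̂^{(P1)}‖₂² over β^{(P2)} ⪰ 0, with minimizer β̂^{(P2)}. If β̂^{(P2)} has all entries strictly positive, then the vector β̂ defined by β̂_S = β̂^{(P2)} and β̂_{S^c} = β̂^{(P1)} is a minimizer of the full NNLS problem min_{β⪰0}(1/n)‖y − Xβ‖₂². -/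

import Mathlib

open Matrix Finset

noncomputable section

/-- Squared Euclidean norm of a vector. -/
def sqNorm {n : ℕ} (v : Fin n → ℝ) : ℝ := ∑ i, (v i) ^ 2

/-- `b` is a minimizer of the NNLS problem `min_{β ⪰ 0} (1/n)‖y − Xβ‖₂²`. -/
def IsNNLSMin {n p : ℕ} (X : Matrix (Fin n) (Fin p) ℝ) (y : Fin n → ℝ)
    (b : Fin p → ℝ) : Prop :=
  (∀ j, 0 ≤ b j) ∧ ∀ β : Fin p → ℝ, (∀ j, 0 ≤ β j) →
    (1 / (n : ℝ)) * sqNorm (y - X.mulVec b) ≤ (1 / (n : ℝ)) * sqNorm (y - X.mulVec β)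

/-- Orthogonal projection Π_S onto the span of the columns of `X` indexed by `S`. -/
def projS {n p : ℕ} (X : Matrix (Fin n) (Fin p) ℝ) (S : Finset (Fin p))
    (v : Fin n → ℝ) : Fin n → ℝ :=
  WithLp.equiv 2 (Fin n → ℝ) (Submodule.orthogonalProjectionOnto
      (Submodule.span ℝ ((fun j => (WithLp.equiv 2 (Fin n → ℝ)).symm (X.transpose j)) '' S))
      ((WithLp.equiv 2 (Fin n → ℝ)).symm v) : EuclideanSpace ℝ (Fin n))

namespace NNLSaux

/-- Coercion to Euclidean space. -/
abbrev toE {n : ℕ} (v : Fin n → ℝ) : EuclideanSpace ℝ (Fin n) :=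
  (WithLp.equiv 2 (Fin n → ℝ)).symm v

lemma sqNorm_eq {n : ℕ} (v : Fin n → ℝ) : sqNorm v = ‖toE v‖ ^ 2 := by
  rw [← real_inner_self_eq_norm_sq, PiLp.inner_apply]
  simp [sqNorm, RCLike.inner_apply, sq]

/-- The span of the selected columns. -/
abbrev K {n p : ℕ} (X : Matrix (Fin n) (Fin p) ℝ) (S : Finset (Fin p)) :
    Submodule ℝ (EuclideanSpace ℝ (Fin n)) :=
  Submodule.span ℝ ((fun j => (WithLp.equiv 2 (Fin n → ℝ)).symm (X.transpose j)) '' S)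

/-- The orthogonal projection onto `K X S`, as a plain map. -/
abbrev Q {n p : ℕ} (X : Matrix (Fin n) (Fin p) ℝ) (S : Finset (Fin p))
    (u : EuclideanSpace ℝ (Fin n)) : EuclideanSpace ℝ (Fin n) :=
  (Submodule.orthogonalProjectionOnto (K X S) u : EuclideanSpace ℝ (Fin n))

lemma toE_projS {n p : ℕ} (X : Matrix (Fin n) (Fin p) ℝ) (S : Finset (Fin p))
    (v : Fin n → ℝ) : toE (projS X S v) = Q X S (toE v) := rfl

lemma nnlsMulVecSum {n p : ℕ} (X : Matrix (Fin n) (Fin p) ℝ) (β : Fin p → ℝ) :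
    X.mulVec β = ∑ j, β j • X.transpose j := by
  funext i
  simp [Matrix.mulVec, dotProduct, Finset.sum_apply, mul_comm]

lemma toE_mulVec {n p : ℕ} (X : Matrix (Fin n) (Fin p) ℝ) (β : Fin p → ℝ) :
    toE (X.mulVec β) = ∑ j, β j • toE (X.transpose j) := by
  rw [show toE (X.mulVec β)
      = (WithLp.linearEquiv 2 ℝ (Fin n → ℝ)).symm (X.mulVec β) from rfl,
    nnlsMulVecSum, map_sum]
  simp only [_root_.map_smul]
  rfl

lemma mem_K {n p : ℕ} (X : Matrix (Fin n) (Fin p) ℝ) (S : Finset (Fin p))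
    (β : Fin p → ℝ) (hsupp : ∀ j ∉ S, β j = 0) : toE (X.mulVec β) ∈ K X S := by
  rw [toE_mulVec]
  refine Submodule.sum_mem _ fun j _ => ?_
  by_cases hj : j ∈ S
  · exact Submodule.smul_mem _ _ (Submodule.subset_span ⟨j, by simpa using hj, rfl⟩)
  · simp [hsupp j hj]

lemma pyth {n p : ℕ} {X : Matrix (Fin n) (Fin p) ℝ} {S : Finset (Fin p)}
    {a b : EuclideanSpace ℝ (Fin n)} (ha : a ∈ K X S) (hb : b ∈ (K X S)ᗮ) :
    ‖a + b‖ ^ 2 = ‖a‖ ^ 2 + ‖b‖ ^ 2 := by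
  rw [norm_add_sq_real, Submodule.inner_right_of_mem_orthogonal ha hb]; ring

lemma quad_key {g c δ : ℝ} (hc : 0 ≤ c) (hδ : 0 < δ)
    (h : ∀ t : ℝ, |t| ≤ δ → 0 ≤ -(2 * t * g) + t ^ 2 * c) : g = 0 := by
  by_contra hg
  have habs : 0 < |g| := abs_pos.2 hg
  have hs0 : 0 < min δ (|g| / (c + 1)) := lt_min hδ (div_pos habs (by linarith))
  set s := min δ (|g| / (c + 1)) with hsdef
  have hsδ : s ≤ δ := min_le_left _ _
  have hs2 : s * (c + 1) ≤ |g| := by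
    have h1 : s ≤ |g| / (c + 1) := min_le_right _ _
    calc s * (c + 1) ≤ |g| / (c + 1) * (c + 1) := by nlinarith
      _ = |g| := div_mul_cancel₀ _ (by linarith)
  rcases (show g ≠ 0 from hg).lt_or_gt with hneg | hpos
  · have h2 := h (-s) (by rw [abs_neg, abs_of_pos hs0]; exact hsδ)
    have hgabs : |g| = -g := abs_of_neg hneg
    nlinarith [mul_le_mul_of_nonneg_left hs2 hs0.le]
  · have h2 := h s (by rw [abs_of_pos hs0]; exact hsδ)
    have hgabs : |g| = g := abs_of_pos hpos
    nlinarith [mul_le_mul_of_nonneg_left hs2 hs0.le]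

end NNLSaux

/-- decomposition of the NNLS problem. Coefficient vectors over `S^c`
(resp. over `S`) are encoded as vectors in ℝ^p vanishing on `S` (resp. on `S^c`); then
`Z β^{(P1)} = Π_S^⊥ X β^{(P1)}`, `X_S β*_S = X β*`, etc. If the minimizer of (P2)
is strictly positive on `S`, then combining the minimizers of (P1) and (P2) yields
a minimizer of the full NNLS problem for `y = Xβ* + ε`. -/
theorem stmt_7 (n p : ℕ) (hn : 0 < n) (X : Matrix (Fin n) (Fin p) ℝ)
    (βstar : Fin p → ℝ) (hβstar : ∀ j, 0 ≤ βstar j)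
    (S : Finset (Fin p)) (hS : ∀ j, j ∈ S ↔ 0 < βstar j)
    (ε : Fin n → ℝ)
    (βP1 : Fin p → ℝ) (hP1pos : ∀ j, 0 ≤ βP1 j) (hP1supp : ∀ j ∈ S, βP1 j = 0)
    (hP1min : ∀ β : Fin p → ℝ, (∀ j, 0 ≤ β j) → (∀ j ∈ S, β j = 0) →
      (1 / (n : ℝ)) * sqNorm ((ε - projS X S ε) - (X.mulVec βP1 - projS X S (X.mulVec βP1)))
        ≤ (1 / (n : ℝ)) * sqNorm ((ε - projS X S ε) - (X.mulVec β - projS X S (X.mulVec β))))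
    (βP2 : Fin p → ℝ) (hP2pos : ∀ j, 0 ≤ βP2 j) (hP2supp : ∀ j ∉ S, βP2 j = 0)
    (hP2min : ∀ β : Fin p → ℝ, (∀ j, 0 ≤ β j) → (∀ j ∉ S, β j = 0) →
      (1 / (n : ℝ)) * sqNorm (projS X S ε + X.mulVec βstar - X.mulVec βP2
          - projS X S (X.mulVec βP1))
        ≤ (1 / (n : ℝ)) * sqNorm (projS X S ε + X.mulVec βstar - X.mulVec β
          - projS X S (X.mulVec βP1)))
    (hpos : ∀ j ∈ S, 0 < βP2 j) :
    IsNNLSMin X (X.mulVec βstar + ε) (fun j => if j ∈ S then βP2 j else βP1 j) := by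
  classical
  open NNLSaux in
  have hn' : (0:ℝ) < 1 / n := by positivity
  -- shorthand
  set εE : EuclideanSpace ℝ (Fin n) := toE ε with hεE
  set c1 : EuclideanSpace ℝ (Fin n) := toE (X.mulVec βP1) with hc1
  set c2 : EuclideanSpace ℝ (Fin n) := toE (X.mulVec βP2) with hc2
  set cs : EuclideanSpace ℝ (Fin n) := toE (X.mulVec βstar) with hcs
  set A : EuclideanSpace ℝ (Fin n) := Q X S εE + cs - c2 - Q X S c1 with hA
  have hβstar_supp : ∀ j ∉ S, βstar j = 0 := fun j hj =>
    le_antisymm (not_lt.1 fun h => hj ((hS j).2 h)) (hβstar j)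
  have hAmem : A ∈ K X S := by
    refine Submodule.sub_mem _ (Submodule.sub_mem _ (Submodule.add_mem _ ?_ ?_) ?_) ?_
    · exact SetLike.coe_mem _
    · exact mem_K X S βstar hβstar_supp
    · exact mem_K X S βP2 hP2supp
    · exact SetLike.coe_mem _
  -- translate the P2 objective
  have hsq2 : ∀ β : Fin p → ℝ,
      sqNorm (projS X S ε + X.mulVec βstar - X.mulVec β - projS X S (X.mulVec βP1))
        = ‖Q X S εE + cs - toE (X.mulVec β) - Q X S c1‖ ^ 2 := fun β => sqNorm_eq _
  -- A = 0
  have hAzero : A = 0 := by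
    have hinner : ∀ j ∈ S, inner ℝ (toE (X.transpose j)) A = (0:ℝ) := by
      intro j hj
      set vj : EuclideanSpace ℝ (Fin n) := toE (X.transpose j) with hvj
      have key : inner ℝ A vj = (0:ℝ) := by
        refine quad_key (g := inner ℝ A vj) (c := ‖vj‖ ^ 2) (sq_nonneg _) (hpos j hj) ?_
        intro t ht
        set ej : Fin p → ℝ := Pi.single j 1 with hej
        have hfeas : ∀ k, 0 ≤ βP2 k + t * ej k := by
          intro k
          by_cases hk : k = j
          · subst hk
            simp only [hej, Pi.single_eq_same, mul_one]
            have := abs_le.1 ht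
            linarith [this.1]
          · simp [hej, Pi.single_eq_of_ne hk, hP2pos k]
        have hsupp' : ∀ k ∉ S, βP2 k + t * ej k = 0 := by
          intro k hk
          have hkj : k ≠ j := fun h => hk (h ▸ hj)
          simp [hej, Pi.single_eq_of_ne hkj, hP2supp k hk]
        have hmin := hP2min (fun k => βP2 k + t * ej k) hfeas hsupp'
        rw [hsq2, hsq2] at hmin
        have hmv : toE (X.mulVec (fun k => βP2 k + t * ej k))
            = c2 + t • vj := by
          have heq1 : (fun k => βP2 k + t * ej k) = βP2 + t • ej := by
            funext k; simp [Pi.smul_apply, smul_eq_mul]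
          rw [heq1]
          ext i
          simp [Matrix.mulVec_add, Matrix.mulVec_smul, hej, Matrix.mulVec_single, hvj, hc2,
            Matrix.transpose_apply]
        rw [hmv] at hmin
        have hres : Q X S εE + cs - (c2 + t • vj) - Q X S c1 = A - t • vj := by
          rw [hA]; abel
        rw [hres] at hmin
        have hmin' : ‖A‖ ^ 2 ≤ ‖A - t • vj‖ ^ 2 := le_of_mul_le_mul_left (by
          calc (1:ℝ)/n * ‖A‖ ^ 2 = 1/n * ‖Q X S εE + cs - c2 - Q X S c1‖ ^ 2 := by rw [hA]
            _ ≤ _ := hmin) hn'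
        have hexp : ‖A - t • vj‖ ^ 2 = ‖A‖ ^ 2 - 2 * t * inner ℝ A vj + t ^ 2 * ‖vj‖ ^ 2 := by
          rw [norm_sub_sq_real, real_inner_smul_right, norm_smul]
          simp [mul_pow, sq_abs]; ring
        rw [hexp] at hmin'
        linarith
      rw [real_inner_comm]; exact key
    have hAperp : A ∈ (K X S)ᗮ := by
      rw [Submodule.mem_orthogonal]
      intro u hu
      induction hu using Submodule.span_induction with
      | mem x hx =>
        obtain ⟨j, hj, rfl⟩ := hx
        exact hinner j (by simpa using hj)
      | zero => simp
      | add x y _ _ hx hy => rw [inner_add_left, hx, hy]; ring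
      | smul r x _ hx => rw [inner_smul_left, hx]; simp
    have := Submodule.inner_right_of_mem_orthogonal hAmem hAperp
    exact inner_self_eq_zero.1 this
  -- Main argument
  constructor
  · intro j; by_cases hj : j ∈ S <;> simp [hj, hP2pos j, hP1pos j]
  · intro β hβ
    -- combined vector
    have hcomb : (fun j => if j ∈ S then βP2 j else βP1 j) = βP2 + βP1 := by
      funext j
      by_cases hj : j ∈ S
      · simp [hj, hP1supp j hj]
      · simp [hj, hP2supp j hj]
    set βS : Fin p → ℝ := fun j => if j ∈ S then β j else 0 with hβS
    set βSc : Fin p → ℝ := fun j => if j ∈ S then 0 else β j with hβSc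
    have hsplit : β = βS + βSc := by
      funext j; by_cases hj : j ∈ S <;> simp [hβS, hβSc, hj]
    set B0 : EuclideanSpace ℝ (Fin n) := (εE - Q X S εE) - (c1 - Q X S c1) with hB0
    set cS : EuclideanSpace ℝ (Fin n) := toE (X.mulVec βS) with hcS
    set cSc : EuclideanSpace ℝ (Fin n) := toE (X.mulVec βSc) with hcSc
    set A' : EuclideanSpace ℝ (Fin n) := Q X S εE + cs - cS - Q X S cSc with hA'
    set B' : EuclideanSpace ℝ (Fin n) := (εE - Q X S εE) - (cSc - Q X S cSc) with hB'
    have hA'mem : A' ∈ K X S := by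
      refine Submodule.sub_mem _ (Submodule.sub_mem _ (Submodule.add_mem _ ?_ ?_) ?_) ?_
      · exact SetLike.coe_mem _
      · exact mem_K X S βstar hβstar_supp
      · exact mem_K X S βS (fun j hj => by simp [hβS, hj])
      · exact SetLike.coe_mem _
    have hB'mem : B' ∈ (K X S)ᗮ := by
      exact Submodule.sub_mem _ (Submodule.sub_starProjection_mem_orthogonal (K := K X S) εE)
        (Submodule.sub_starProjection_mem_orthogonal (K := K X S) cSc)
    -- LHS norm
    have hLHS : sqNorm (X.mulVec βstar + ε
        - X.mulVec (fun j => if j ∈ S then βP2 j else βP1 j)) = ‖B0‖ ^ 2 := by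
      rw [sqNorm_eq]
      congr 1
      have h1 : toE (X.mulVec βstar + ε
          - X.mulVec (fun j => if j ∈ S then βP2 j else βP1 j)) = cs + εE - (c2 + c1) := by
        rw [hcomb]
        ext i
        simp [Matrix.mulVec_add, hcs, hεE, hc2, hc1]
      have h4 : cs + εE - (c2 + c1) = A + ((εE - Q X S εE) - (c1 - Q X S c1)) := by
        rw [hA]; abel
      rw [h1, h4, hAzero, zero_add, hB0]
    -- RHS norm
    have hRHS : sqNorm (X.mulVec βstar + ε - X.mulVec β) = ‖A'‖ ^ 2 + ‖B'‖ ^ 2 := by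
      rw [sqNorm_eq]
      have h1 : toE (X.mulVec βstar + ε - X.mulVec β) = A' + B' := by
        have h2 : toE (X.mulVec β) = cS + cSc := by
          rw [hsplit]
          ext i
          simp [Matrix.mulVec_add, hcS, hcSc]
        have h3 : toE (X.mulVec βstar + ε - X.mulVec β) = cs + εE - (cS + cSc) := by
          ext i
          simp only [hcs, hεE]
          have := congrArg (fun v => v i) h2
          simp at this ⊢
          linarith
        rw [h3, hA', hB']
        abel
      rw [h1, pyth hA'mem hB'mem]
    -- P1 comparison
    have hP1 := hP1min βSc (fun j => by by_cases hj : j ∈ S <;> simp [hβSc, hj, hβ j])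
      (fun j hj => by simp [hβSc, hj])
    have hsq1 : ∀ γ : Fin p → ℝ,
        sqNorm ((ε - projS X S ε) - (X.mulVec γ - projS X S (X.mulVec γ)))
          = ‖(εE - Q X S εE) - (toE (X.mulVec γ) - Q X S (toE (X.mulVec γ)))‖ ^ 2 :=
      fun γ => sqNorm_eq _
    rw [hsq1, hsq1] at hP1
    rw [hLHS, hRHS]
    have hB0eq : ‖B0‖ ^ 2 = ‖(εE - Q X S εE) - (toE (X.mulVec βP1) - Q X S (toE (X.mulVec βP1)))‖ ^ 2 := by
      rw [hB0, hc1]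
    have hB'eq : ‖(εE - Q X S εE) - (toE (X.mulVec βSc) - Q X S (toE (X.mulVec βSc)))‖ ^ 2 = ‖B'‖ ^ 2 := by
      rw [hB', hcSc]
    calc 1/(n:ℝ) * ‖B0‖ ^ 2 ≤ 1/(n:ℝ) * ‖B'‖ ^ 2 := by
          rw [hB0eq, ← hB'eq]; exact hP1
      _ ≤ 1/(n:ℝ) * (‖A'‖ ^ 2 + ‖B'‖ ^ 2) := by nlinarith [sq_nonneg ‖A'‖]
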